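/- The maximization of the Sharpe ratio aᵀz / sqrt(zᵀQz) over the simplex {z : 1ᵀz = 1, z ≥ 0} is equivalent to the convex QP: minimize (1/2)yᵀQy subject to aᵀy = 1, y ≥ 0; specifically, if y* solves the QP and 1ᵀy* > 0, then z* = y*/(1ᵀy*) maximizes the Sharpe ratio over the simplex, provided there exists a feasible z with aᵀz > 0. -/

import Mathlib

open Matrix

lemma quad_smul (n : ℕ) (Q : Matrix (Fin n) (Fin n) ℝ) (c : ℝ) (w : Fin n → ℝ) :
    (c • w) ⬝ᵥ Q *ᵥ (c • w) = c^2 * (w ⬝ᵥ Q *ᵥ w) := by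
  rw [Matrix.mulVec_smul, smul_dotProduct, dotProduct_smul,
    smul_eq_mul, smul_eq_mul]
  ring

/-- Max-Sharpe via QP: if `y` solves `min (1/2)yᵀQy s.t. aᵀy = 1, y ≥ 0` and `1ᵀy > 0`,
then `z = y / (1ᵀy)` maximizes the Sharpe ratio `aᵀw / sqrt(wᵀQw)` over the simplex,
provided some feasible `w` has `aᵀw > 0`. -/
theorem max_sharpe_via_qp (n : ℕ) (Q : Matrix (Fin n) (Fin n) ℝ) (hQ : Q.PosDef)
    (a : Fin n → ℝ)
    (hpos : ∃ w : Fin n → ℝ, (∑ j, w j) = 1 ∧ (∀ j, 0 ≤ w j) ∧ 0 < a ⬝ᵥ w)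
    (y : Fin n → ℝ) (hay : a ⬝ᵥ y = 1) (hy0 : ∀ j, 0 ≤ y j)
    (hymin : ∀ w : Fin n → ℝ, a ⬝ᵥ w = 1 → (∀ j, 0 ≤ w j) →
      (1 / 2) * (y ⬝ᵥ Q *ᵥ y) ≤ (1 / 2) * (w ⬝ᵥ Q *ᵥ w))
    (hsum : 0 < ∑ j, y j)
    (z : Fin n → ℝ) (hz : z = (∑ j, y j)⁻¹ • y) :
    ((∑ j, z j) = 1 ∧ ∀ j, 0 ≤ z j) ∧
    ∀ w : Fin n → ℝ, (∑ j, w j) = 1 → (∀ j, 0 ≤ w j) →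
      a ⬝ᵥ w / Real.sqrt (w ⬝ᵥ Q *ᵥ w) ≤ a ⬝ᵥ z / Real.sqrt (z ⬝ᵥ Q *ᵥ z) := by
  set s : ℝ := ∑ j, y j with hs
  have hy_ne : y ≠ 0 := by
    intro h
    rw [h, dotProduct_zero] at hay
    exact one_ne_zero hay.symm
  have ht : 0 < y ⬝ᵥ Q *ᵥ y := hQ.dotProduct_mulVec_pos hy_ne
  set t : ℝ := y ⬝ᵥ Q *ᵥ y with htdef
  -- z facts
  have hzsum : (∑ j, z j) = 1 := by
    rw [hz]
    simp only [Pi.smul_apply, smul_eq_mul, ← Finset.mul_sum]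
    field_simp
    exact hs.symm
  have hz0 : ∀ j, 0 ≤ z j := by
    intro j
    rw [hz]
    exact mul_nonneg (inv_nonneg.mpr hsum.le) (hy0 j)
  have haz : a ⬝ᵥ z = s⁻¹ := by
    rw [hz, dotProduct_smul, hay, smul_eq_mul, mul_one]
  have hzq : z ⬝ᵥ Q *ᵥ z = s⁻¹^2 * t := by
    rw [hz]; exact quad_smul n Q s⁻¹ y
  -- Sharpe of z equals 1 / sqrt t
  have hRHS : a ⬝ᵥ z / Real.sqrt (z ⬝ᵥ Q *ᵥ z) = 1 / Real.sqrt t := by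
    rw [haz, hzq, Real.sqrt_mul (sq_nonneg _), Real.sqrt_sq (inv_nonneg.mpr hsum.le)]
    rw [div_eq_div_iff (by positivity) (by positivity)]
    ring
  refine ⟨⟨hzsum, hz0⟩, ?_⟩
  intro w hwsum hw0
  rw [hRHS]
  have hw_ne : w ≠ 0 := by
    intro h
    rw [h] at hwsum
    simp at hwsum
  have hwq : 0 < w ⬝ᵥ Q *ᵥ w := hQ.dotProduct_mulVec_pos hw_ne
  by_cases hb : 0 < a ⬝ᵥ w
  · set b : ℝ := a ⬝ᵥ w with hbdef
    have haw' : a ⬝ᵥ (b⁻¹ • w) = 1 := by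
      rw [dotProduct_smul, smul_eq_mul, ← hbdef, inv_mul_cancel₀ hb.ne']
    have hw'0 : ∀ j, 0 ≤ (b⁻¹ • w) j := fun j =>
      mul_nonneg (inv_nonneg.mpr hb.le) (hw0 j)
    have hmin := hymin (b⁻¹ • w) haw' hw'0
    rw [quad_smul n Q b⁻¹ w] at hmin
    have hkey : t ≤ b⁻¹^2 * (w ⬝ᵥ Q *ᵥ w) := by linarith
    have hkey2 : b^2 * t ≤ w ⬝ᵥ Q *ᵥ w := by
      have hb2 : 0 < b^2 := by positivity
      calc b^2 * t ≤ b^2 * (b⁻¹^2 * (w ⬝ᵥ Q *ᵥ w)) := by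
            exact mul_le_mul_of_nonneg_left hkey hb2.le
        _ = (w ⬝ᵥ Q *ᵥ w) := by field_simp
    -- b / sqrt(wQw) ≤ 1 / sqrt t
    rw [div_le_div_iff₀ (Real.sqrt_pos.mpr hwq) (Real.sqrt_pos.mpr ht)]
    have := Real.sqrt_le_sqrt hkey2
    rw [Real.sqrt_mul (sq_nonneg _), Real.sqrt_sq hb.le] at this
    linarith
  · push_neg at hb
    have h1 : a ⬝ᵥ w / Real.sqrt (w ⬝ᵥ Q *ᵥ w) ≤ 0 :=
      div_nonpos_of_nonpos_of_nonneg hb (Real.sqrt_nonneg _)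
    have h2 : (0:ℝ) ≤ 1 / Real.sqrt t := by positivity
    linarith
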